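/- arXiv:2206.09719 — 2 statements merged into one kernel-verified Lean document; each statement's English description precedes it below -/
import Mathlib

section
/- No 3-cap 2-flat is a point reflection of itself: if S is a cap in F₂ = (Fin 2 → ZMod 3) with |S| = 3, then for every O ∈ F₂ one has S ≠ {2•O − x : x ∈ S}. -/
/-- A cap in `Fin n → ZMod 3`: no three distinct points sum to zero. -/
def IsCap {n : ℕ} (S : Finset (Fin n → ZMod 3)) : Prop :=
  ∀ a ∈ S, ∀ b ∈ S, ∀ c ∈ S, a ≠ b → a ≠ c → b ≠ c → a + b + c ≠ 0

/-- No 3-cap 2-flat is a point reflection of itself. -/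
theorem cap2_3_no_self_point_reflection (S : Finset (Fin 2 → ZMod 3))
    (hS : IsCap S) (hcard : S.card = 3) (O : Fin 2 → ZMod 3) :
    S ≠ S.image (fun x => (2 : ZMod 3) • O - x) := by
  intro h
  set f : (Fin 2 → ZMod 3) → (Fin 2 → ZMod 3) := fun x => (2 : ZMod 3) • O - x with hf
  have hinj : Function.Injective f := by
    intro x y hxy
    simpa [hf, sub_right_injective.eq_iff] using hxy
  have hsum : ∑ x ∈ S, x = ∑ x ∈ S, f x := by
    conv_lhs => rw [h]
    rw [Finset.sum_image (fun a _ b _ hab => hinj hab)]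
  have hsum2 : ∑ x ∈ S, f x = S.card • ((2 : ZMod 3) • O) - ∑ x ∈ S, x := by
    rw [hf]
    rw [Finset.sum_sub_distrib, Finset.sum_const]
  have h3 : (S.card : ℕ) • ((2 : ZMod 3) • O) = 0 := by
    rw [hcard, ← Nat.cast_smul_eq_nsmul (ZMod 3)]
    have h30 : ((3:ℕ):ZMod 3) = 0 := rfl
    rw [h30, zero_smul]
  have hzero : ∑ x ∈ S, x = 0 := by
    have h2 : (2 : ℕ) • (∑ x ∈ S, x) = 0 := by
      rw [two_smul]
      nth_rewrite 2 [hsum]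
      rw [hsum2, h3, zero_sub, add_neg_cancel]
    funext i
    have hi := congrFun h2 i
    simp only [Pi.smul_apply, Pi.zero_apply] at hi
    have hz : ∀ z : ZMod 3, (2:ℕ) • z = 0 → z = 0 := by decide
    exact hz _ hi
  obtain ⟨a, b, c, hab, hac, hbc, hSabc⟩ := Finset.card_eq_three.mp hcard
  have : a + b + c = 0 := by
    rw [hSabc] at hzero
    simpa [Finset.sum_insert, hab, hac, hbc, add_assoc] using hzero
  exact hS a (by simp [hSabc]) b (by simp [hSabc]) c (by simp [hSabc]) hab hac hbc this
end

section
/- No 9-cap 3-flat is a point reflection of itself: if S is a cap in F₃ = (Fin 3 → ZMod 3) with |S| = 9, then for every O ∈ F₃ one has S ≠ {2•O − x : x ∈ S}. -/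
lemma refl_invol (O : Fin 3 → ZMod 3) :
    Function.Involutive (fun x => (2 : ZMod 3) • O - x) := by
  intro x
  funext i
  simp [Pi.smul_apply]

/-- No 9-cap 3-flat is a point reflection of itself. -/
theorem cap3_9_no_self_point_reflection (S : Finset (Fin 3 → ZMod 3))
    (hS : IsCap S) (hcard : S.card = 9) (O : Fin 3 → ZMod 3) :
    S ≠ S.image (fun x => (2 : ZMod 3) • O - x) := by
  intro h
  set f : (Fin 3 → ZMod 3) → (Fin 3 → ZMod 3) := fun x => (2 : ZMod 3) • O - x with hf
  have hinv : Function.Involutive f := refl_invol O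
  have hmaps : ∀ x ∈ S, f x ∈ S := by
    intro x hx
    rw [h]
    exact Finset.mem_image_of_mem _ hx
  -- f induces an involutive permutation of S
  have hmem : ∀ x : {y // y ∈ S}, f x.1 ∈ S := fun x => hmaps x.1 x.2
  set g : {y // y ∈ S} → {y // y ∈ S} := fun x => ⟨f x.1, hmem x⟩ with hg
  have hginv : Function.Involutive g := by
    intro x
    apply Subtype.ext
    exact hinv x.1
  set σ : Equiv.Perm {y // y ∈ S} := hginv.toPerm g with hσ
  have hσ2 : σ ^ (2 : ℕ) ^ (1 : ℕ) = 1 := by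
    ext x
    simp [σ, pow_succ, hginv x]
  have hcardS : Fintype.card {y // y ∈ S} = 9 := by
    rw [Fintype.card_coe]; exact hcard
  have hodd : ¬ (2 ∣ Fintype.card {y // y ∈ S}) := by
    rw [hcardS]; decide
  obtain ⟨a, ha⟩ := Equiv.Perm.exists_fixed_point_of_prime hodd hσ2
  -- the fixed point of f is O
  have hfa : f a.1 = a.1 := congrArg Subtype.val ha
  have haO : a.1 = O := by
    funext i
    have := congrFun hfa i
    simp only [hf, Pi.sub_apply, Pi.smul_apply, smul_eq_mul] at this
    have h2 : ∀ u v : ZMod 3, 2 * u - v = v → v = u := by decide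
    exact h2 (O i) (a.1 i) this
  have hO : O ∈ S := haO ▸ a.2
  -- S has more than one element, pick x ≠ O
  have : ∃ x ∈ S, x ≠ O := by
    by_contra hc
    push_neg at hc
    have : S ⊆ {O} := fun x hx => Finset.mem_singleton.2 (hc x hx)
    have := Finset.card_le_card this
    simp [hcard] at this
  obtain ⟨x, hx, hxO⟩ := this
  have hfx : f x ∈ S := hmaps x hx
  have hxfx : x ≠ f x := by
    intro he
    apply hxO
    funext i
    have := congrFun he i
    simp only [hf, Pi.sub_apply, Pi.smul_apply, smul_eq_mul] at this
    have h2 : ∀ u v : ZMod 3, v = 2 * u - v → v = u := by decide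
    exact h2 (O i) (x i) this
  have hfxO : f x ≠ O := by
    intro he
    apply hxO
    funext i
    have := congrFun he i
    simp only [hf, Pi.sub_apply, Pi.smul_apply, smul_eq_mul] at this
    have h2 : ∀ u v : ZMod 3, 2 * u - v = u → v = u := by decide
    exact h2 (O i) (x i) this
  apply hS x hx (f x) hfx O hO hxfx hxO hfxO
  funext i
  simp only [hf, Pi.add_apply, Pi.sub_apply, Pi.smul_apply, Pi.zero_apply, smul_eq_mul]
  have h3 : ∀ u v : ZMod 3, v + (2 * u - v) + u = 0 := by decide
  exact h3 (O i) (x i)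
end
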